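/- Let p ∈ [1,∞] and let f : ℝ → ℝ be a 1-periodic measurable function with f ∈ L^p(0,1), such that for some 0 < a < b < 1 one has f(x) ≤ 0 for almost every x ∈ [a,b] and f(x) ≥ 0 for almost every x ∈ [0,1]∖[a,b]. Define F(x) = ∫₀¹ 𝒢′(x−y) f(y) dy. Then F(b) ≥ F(a); moreover F(b) = F(a) holds only when f(x) = 0 for almost every x. -/

import Mathlib

open MeasureTheory Real
open scoped ENNReal NNReal Pointwise

/-- The 1-periodic kernel `𝒢′(x) = sinh(x - ⌊x⌋ - 1/2)/(2 sinh(1/2))`, the derivative of the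
periodic Green's function of `1 - d²/dx²` on the circle `ℝ/ℤ`. -/
noncomputable def bbmGper' (x : ℝ) : ℝ :=
  Real.sinh (x - ↑⌊x⌋ - 1 / 2) / (2 * Real.sinh (1 / 2))

lemma sinh_half_pos : (0:ℝ) < Real.sinh (1/2) := Real.sinh_pos_iff.mpr (by norm_num)

lemma measurable_bbmGper' : Measurable bbmGper' := by
  have h : bbmGper' = fun x => Real.sinh (Int.fract x - 1/2) / (2 * Real.sinh (1/2)) := by
    funext x; rw [bbmGper', Int.self_sub_floor]
  rw [h]
  exact (Real.measurable_sinh.comp (measurable_fract.sub measurable_const)).div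
    measurable_const

lemma bbmGper'_bound (x : ℝ) : |bbmGper' x| ≤ 1/2 := by
  have h1 : (0:ℝ) ≤ x - ↑⌊x⌋ := by
    have := Int.floor_le x; linarith
  have h2 : x - ↑⌊x⌋ < 1 := by
    have := Int.lt_floor_add_one x; linarith
  have habs : |x - ↑⌊x⌋ - 1/2| ≤ 1/2 := by
    rw [abs_le]; constructor <;> linarith
  have hs : |Real.sinh (x - ↑⌊x⌋ - 1/2)| ≤ Real.sinh (1/2) := by
    rw [Real.abs_sinh]
    exact Real.sinh_le_sinh.mpr habs
  rw [bbmGper', abs_div]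
  rw [abs_of_pos (by positivity : (0:ℝ) < 2 * Real.sinh (1/2))]
  rw [div_le_iff₀ (by positivity)]
  calc |Real.sinh (x - ↑⌊x⌋ - 1/2)| ≤ Real.sinh (1/2) := hs
    _ = 1/2 * (2 * Real.sinh (1/2)) := by ring

lemma bbmGper'_eval_Ico {x : ℝ} (h0 : 0 ≤ x) (h1 : x < 1) :
    bbmGper' x = Real.sinh (x - 1/2) / (2 * Real.sinh (1/2)) := by
  rw [bbmGper', Int.floor_eq_zero_iff.mpr ⟨h0, h1⟩]
  norm_num

lemma bbmGper'_eval_neg {x : ℝ} (h0 : -1 ≤ x) (h1 : x < 0) :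
    bbmGper' x = Real.sinh (x + 1/2) / (2 * Real.sinh (1/2)) := by
  have : ⌊x⌋ = -1 := Int.floor_eq_iff.mpr (by push_cast; constructor <;> linarith)
  rw [bbmGper', this]
  push_cast
  ring_nf

/-- Strict kernel comparison: `𝒢′(a-y) < 𝒢′(b-y)` when `y` lies outside `[a,b]`. -/
lemma bbm_K_pos {a b y : ℝ} (h0a : 0 < a) (hab : a < b) (hb1 : b < 1)
    (hy : y ∈ Set.Ioo (0:ℝ) 1) (hout : y < a ∨ b < y) :
    bbmGper' (a - y) < bbmGper' (b - y) := by
  obtain ⟨hy0, hy1⟩ := hy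
  rcases hout with h | h
  · -- y < a : both arguments in (0,1)
    rw [bbmGper'_eval_Ico (by linarith) (by linarith),
        bbmGper'_eval_Ico (by linarith) (by linarith)]
    exact (div_lt_div_iff_of_pos_right (by positivity)).mpr (Real.sinh_lt_sinh.mpr (by linarith))
  · -- b < y : both arguments in (-1,0)
    rw [bbmGper'_eval_neg (by linarith) (by linarith),
        bbmGper'_eval_neg (by linarith) (by linarith)]
    exact (div_lt_div_iff_of_pos_right (by positivity)).mpr (Real.sinh_lt_sinh.mpr (by linarith))

/-- Strict kernel comparison: `𝒢′(b-y) < 𝒢′(a-y)` when `y` lies strictly inside `(a,b)`. -/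
lemma bbm_K_neg {a b y : ℝ} (h0a : 0 < a) (hab : a < b) (hb1 : b < 1)
    (ha : a < y) (hb : y < b) :
    bbmGper' (b - y) < bbmGper' (a - y) := by
  rw [bbmGper'_eval_Ico (by linarith) (by linarith),
      bbmGper'_eval_neg (by linarith) (by linarith)]
  exact (div_lt_div_iff_of_pos_right (by positivity)).mpr (Real.sinh_lt_sinh.mpr (by linarith))

/-- A 1-periodic function vanishing a.e. on `(0,1)` vanishes a.e. on `ℝ`. -/
lemma periodic_ae_zero (f : ℝ → ℝ) (hper : Function.Periodic f 1)
    (h : ∀ᵐ x ∂(volume.restrict (Set.Ioo (0:ℝ) 1)), f x = 0) : ∀ᵐ x : ℝ, f x = 0 := by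
  rw [ae_restrict_iff' measurableSet_Ioo] at h
  rw [ae_iff] at h ⊢
  set T : Set ℝ := {x | ¬(x ∈ Set.Ioo (0:ℝ) 1 → f x = 0)} with hT
  have hsub : {x : ℝ | ¬ f x = 0} ⊆ (⋃ n : ℤ, ((n:ℝ) +ᵥ T)) ∪ (⋃ n : ℤ, {(n:ℝ)}) := by
    intro x hx
    by_cases hint : x = (⌊x⌋ : ℝ)
    · exact Or.inr (Set.mem_iUnion.mpr ⟨⌊x⌋, hint⟩)
    · refine Or.inl (Set.mem_iUnion.mpr ⟨⌊x⌋, ?_⟩)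
      rw [Set.mem_vadd_set_iff_neg_vadd_mem]
      have h0 : (0:ℝ) < x - ⌊x⌋ := by
        have := Int.floor_le x
        rcases lt_or_eq_of_le this with h' | h'
        · linarith
        · exact absurd h'.symm hint
      have h1 : x - ⌊x⌋ < 1 := by have := Int.lt_floor_add_one x; linarith
      have hfx : f (x - ⌊x⌋) = f x := by
        have := hper.sub_int_mul_eq (x := x) ⌊x⌋
        simpa using this
      intro hcontra
      have : f (-(⌊x⌋:ℝ) +ᵥ x) = 0 := hcontra (by
        simp only [vadd_eq_add, Set.mem_Ioo]
        constructor <;> [linarith; linarith])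
      simp only [vadd_eq_add] at this
      rw [show -(⌊x⌋:ℝ) + x = x - ⌊x⌋ by ring, hfx] at this
      exact hx this
  refine measure_mono_null hsub ?_
  apply measure_union_null
  · apply measure_iUnion_null
    intro n
    rw [measure_vadd]
    exact h
  · exact measure_iUnion_null fun n => measure_singleton _

/-- Periodic version: if `f` is `1`-periodic, `f ∈ L^p(0,1)`, `f ≤ 0` a.e. on `[a,b]` and
`f ≥ 0` a.e. on `[0,1] ∖ [a,b]`, then `F(x) = ∫₀¹ 𝒢′(x-y) f(y) dy` satisfies `F(b) ≥ F(a)`,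
with equality only if `f = 0` a.e. -/
theorem bbm_key_lemma_circle (p : ℝ≥0∞) (hp : 1 ≤ p) (f : ℝ → ℝ)
    (hper : Function.Periodic f 1)
    (hf : MemLp f p (volume.restrict (Set.Ioo (0:ℝ) 1)))
    (a b : ℝ) (h0a : 0 < a) (hab : a < b) (hb1 : b < 1)
    (hneg : ∀ᵐ x ∂(volume.restrict (Set.Ioo (0:ℝ) 1)), x ∈ Set.Icc a b → f x ≤ 0)
    (hpos : ∀ᵐ x ∂(volume.restrict (Set.Ioo (0:ℝ) 1)), x ∉ Set.Icc a b → 0 ≤ f x) :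
    (∫ y in (0:ℝ)..1, bbmGper' (a - y) * f y) ≤ (∫ y in (0:ℝ)..1, bbmGper' (b - y) * f y) ∧
    ((∫ y in (0:ℝ)..1, bbmGper' (b - y) * f y) = (∫ y in (0:ℝ)..1, bbmGper' (a - y) * f y) →
      ∀ᵐ x : ℝ, f x = 0) := by
  set μ := volume.restrict (Set.Ioo (0:ℝ) 1) with hμ
  haveI : IsFiniteMeasure μ := by
    constructor
    rw [hμ, Measure.restrict_apply_univ]
    simp
  have hInt : Integrable f μ := hf.integrable hp
  -- integrability of kernel times f
  have hIc : ∀ c : ℝ, Integrable (fun y => bbmGper' (c - y) * f y) μ := by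
    intro c
    apply hInt.bdd_mul
    · exact ((measurable_bbmGper'.comp (measurable_const.sub measurable_id))).aestronglyMeasurable
    · exact ae_of_all _ (fun x => (by simpa using bbmGper'_bound (c - x) : ‖bbmGper' (c - x)‖ ≤ 1/2))
  -- rewrite interval integrals as set integrals over Ioo
  have hconv : ∀ c : ℝ, (∫ y in (0:ℝ)..1, bbmGper' (c - y) * f y)
      = ∫ y, bbmGper' (c - y) * f y ∂μ := by
    intro c
    rw [intervalIntegral.integral_of_le (by norm_num : (0:ℝ) ≤ 1),
      integral_Ioc_eq_integral_Ioo]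
  -- a.e. facts
  have hmem : ∀ᵐ y ∂μ, y ∈ Set.Ioo (0:ℝ) 1 := ae_restrict_mem measurableSet_Ioo
  have hna : ∀ᵐ y ∂μ, y ≠ a := by
    rw [hμ]
    exact ae_restrict_of_ae (by
      rw [ae_iff]
      have : {y : ℝ | ¬ y ≠ a} = {a} := by ext y; simp [not_not]
      rw [this]; exact measure_singleton a)
  have hnb : ∀ᵐ y ∂μ, y ≠ b := by
    rw [hμ]
    exact ae_restrict_of_ae (by
      rw [ae_iff]
      have : {y : ℝ | ¬ y ≠ b} = {b} := by ext y; simp [not_not]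
      rw [this]; exact measure_singleton b)
  -- pointwise nonnegativity of integrand difference
  have hae : ∀ᵐ y ∂μ, 0 ≤ bbmGper' (b - y) * f y - bbmGper' (a - y) * f y := by
    filter_upwards [hmem, hna, hnb, hneg, hpos] with y hy hya hyb hn hp'
    rcases lt_trichotomy y a with h | h | h
    · have hK := bbm_K_pos h0a hab hb1 hy (Or.inl h)
      have hfy : 0 ≤ f y := hp' (fun hmem' => absurd hmem'.1 (not_le.mpr h))
      nlinarith
    · exact absurd h hya
    · rcases lt_trichotomy y b with h' | h' | h'
      · have hK := bbm_K_neg h0a hab hb1 h h'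
        have hfy : f y ≤ 0 := hn ⟨h.le, h'.le⟩
        nlinarith
      · exact absurd h' hyb
      · have hK := bbm_K_pos h0a hab hb1 hy (Or.inr h')
        have hfy : 0 ≤ f y := hp' (fun hmem' => absurd hmem'.2 (not_le.mpr h'))
        nlinarith
  have hIdiff : Integrable (fun y => bbmGper' (b - y) * f y - bbmGper' (a - y) * f y) μ :=
    (hIc b).sub (hIc a)
  have hkey : 0 ≤ ∫ y, (bbmGper' (b - y) * f y - bbmGper' (a - y) * f y) ∂μ :=
    integral_nonneg_of_ae hae
  have hsplit : ∫ y, (bbmGper' (b - y) * f y - bbmGper' (a - y) * f y) ∂μ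
      = (∫ y, bbmGper' (b - y) * f y ∂μ) - ∫ y, bbmGper' (a - y) * f y ∂μ :=
    integral_sub (hIc b) (hIc a)
  constructor
  · rw [hconv a, hconv b]
    linarith [hkey, hsplit]
  · intro heq
    rw [hconv a, hconv b] at heq
    have hzero : ∫ y, (bbmGper' (b - y) * f y - bbmGper' (a - y) * f y) ∂μ = 0 := by
      rw [hsplit, heq, sub_self]
    have haez : (fun y => bbmGper' (b - y) * f y - bbmGper' (a - y) * f y) =ᵐ[μ] 0 :=
      (integral_eq_zero_iff_of_nonneg_ae hae hIdiff).mp hzero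
    have hfz : ∀ᵐ y ∂μ, f y = 0 := by
      filter_upwards [hmem, hna, hnb, haez] with y hy hya hyb hz
      simp only [Pi.zero_apply] at hz
      have hfact : (bbmGper' (b - y) - bbmGper' (a - y)) * f y = 0 := by linear_combination hz
      have hKne : bbmGper' (b - y) - bbmGper' (a - y) ≠ 0 := by
        rcases lt_trichotomy y a with h | h | h
        · exact ne_of_gt (sub_pos.mpr (bbm_K_pos h0a hab hb1 hy (Or.inl h)))
        · exact absurd h hya
        · rcases lt_trichotomy y b with h' | h' | h'
          · exact ne_of_lt (sub_neg.mpr (bbm_K_neg h0a hab hb1 h h'))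
          · exact absurd h' hyb
          · exact ne_of_gt (sub_pos.mpr (bbm_K_pos h0a hab hb1 hy (Or.inr h')))
      exact (mul_eq_zero.mp hfact).resolve_left hKne
    exact periodic_ae_zero f hper hfz
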